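/- For every real α > 2 and every real x ≥ 0: e^{−x} · ∑_{i=2}^∞ [Γ(1+α/2)·Γ(i)/Γ(i+α/2)] · (∑_{k=i}^∞ x^k/k!) = 2/(α−2) − (α/(α−2))·F₁(x) − (4x/(α²−4))·F₂(x) + e^{−x}, where F_n(x) = ∑_{m=0}^∞ [(α/2)_m/(n+α/2)_m]·(−x)^m/m! and (a)_m = Γ(a+m)/Γ(a) is the Pochhammer symbol. -/

import Mathlib

set_option maxHeartbeats 1000000

/-- The Pochhammer symbol (rising factorial) `(a)_m = Γ(a+m)/Γ(a)`. -/
noncomputable def poch (a : ℝ) (m : ℕ) : ℝ := Real.Gamma (a + m) / Real.Gamma a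

/-- The confluent hypergeometric series
`F_n(x) = ∑_{m=0}^∞ [(α/2)_m/(n+α/2)_m]·(−x)^m/m!`. -/
noncomputable def Fhyp (α : ℝ) (n : ℕ) (x : ℝ) : ℝ :=
  ∑' m : ℕ, poch (α / 2) m / poch ((n : ℝ) + α / 2) m * (-x) ^ m / (m.factorial : ℝ)

private lemma exp_tsum (x : ℝ) : Real.exp x = ∑' n : ℕ, x ^ n / n.factorial := by
  rw [Real.exp_eq_exp_ℝ, NormedSpace.exp_eq_tsum_div]

private lemma fact_le_gamma {c : ℝ} (hc : 1 ≤ c) (k : ℕ) :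
    Real.Gamma c * k.factorial ≤ Real.Gamma (c + k) := by
  induction k with
  | zero => simp
  | succ k ih =>
    have hck : (0:ℝ) < c + k := by positivity
    have h1 : Real.Gamma (c + (k+1:ℕ)) = (c + k) * Real.Gamma (c + k) := by
      push_cast
      rw [show c + ((k:ℝ)+1) = (c + k) + 1 by ring, Real.Gamma_add_one hck.ne']
    rw [h1]
    have h2 : ((k:ℝ)+1) * (Real.Gamma c * k.factorial) ≤ (c + k) * Real.Gamma (c + k) := by
      apply mul_le_mul (by linarith) ih (by positivity) (by linarith)
    calc Real.Gamma c * (k+1).factorial = ((k:ℝ)+1) * (Real.Gamma c * k.factorial) := by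
          push_cast [Nat.factorial_succ]; ring
      _ ≤ (c + k) * Real.Gamma (c + k) := h2

private lemma pascal_sum (f : ℕ → ℝ) (n : ℕ) :
    ∑ k ∈ Finset.range (n+2), (-1:ℝ)^k * ((n+1).choose k) * f k
      = ∑ k ∈ Finset.range (n+1), (-1:ℝ)^k * (n.choose k) * (f k - f (k+1)) := by
  set G : ℕ → ℝ := fun k => (-1:ℝ)^k * (n.choose k) * f k with hG
  have e0 := Finset.sum_range_succ' (fun k => (-1:ℝ)^k * ((n+1).choose k) * f k) (n+1)
  have e1 : ∀ k, (-1:ℝ)^(k+1) * ((n+1).choose (k+1)) * f (k+1)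
      = G (k+1) - (-1:ℝ)^k * (n.choose k) * f (k+1) := by
    intro k
    have : ((n+1).choose (k+1) : ℝ) = (n.choose k : ℝ) + (n.choose (k+1) : ℝ) := by
      exact_mod_cast congrArg (Nat.cast : ℕ → ℝ) (Nat.choose_succ_succ n k)
    rw [this, hG]
    ring
  have e2 : ∑ k ∈ Finset.range (n+1), G (k+1) + G 0 = ∑ k ∈ Finset.range (n+1), G k := by
    rw [← Finset.sum_range_succ' G (n+1), Finset.sum_range_succ G (n+1)]
    have : G (n+1) = 0 := by
      simp [hG, Nat.choose_eq_zero_of_lt (Nat.lt_succ_self n)]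
    rw [this, add_zero]
  have g0 : (-1:ℝ)^0 * ((n+1).choose 0) * f 0 = G 0 := by simp [hG]
  rw [e0]
  simp only [e1, Finset.sum_sub_distrib]
  rw [g0]
  have : ∑ k ∈ Finset.range (n+1), G (k+1) - ∑ k ∈ Finset.range (n+1), (-1:ℝ)^k * (n.choose k) * f (k+1) + G 0
      = (∑ k ∈ Finset.range (n+1), G (k+1) + G 0) - ∑ k ∈ Finset.range (n+1), (-1:ℝ)^k * (n.choose k) * f (k+1) := by ring
  rw [this, e2]
  rw [← Finset.sum_sub_distrib]
  apply Finset.sum_congr rfl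
  intro k _
  rw [hG]; ring

private lemma Dsum {r : ℝ} (hr : 0 < r) : ∀ (n : ℕ) (s : ℝ), 0 < s →
    ∑ k ∈ Finset.range (n+1), (-1:ℝ)^k * (n.choose k) * (Real.Gamma (k + r) / Real.Gamma (k + s))
      = (∏ i ∈ Finset.range n, (s - r + i)) * Real.Gamma r / Real.Gamma (s + n) := by
  intro n
  induction n with
  | zero => intro s hs; simp
  | succ n ih =>
    intro s hs
    have key : ∀ k : ℕ, Real.Gamma (k + r) / Real.Gamma (k + s)
        - Real.Gamma ((k+1:ℕ) + r) / Real.Gamma ((k+1:ℕ) + s)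
        = (s - r) * (Real.Gamma (k + r) / Real.Gamma (k + (s+1))) := by
      intro k
      have hkr : (0:ℝ) < (k:ℝ) + r := by positivity
      have hks : (0:ℝ) < (k:ℝ) + s := by positivity
      have e1 : Real.Gamma ((k+1:ℕ) + r) = ((k:ℝ) + r) * Real.Gamma (k + r) := by
        push_cast
        rw [show (k:ℝ) + 1 + r = ((k:ℝ) + r) + 1 by ring, Real.Gamma_add_one hkr.ne']
      have e2 : Real.Gamma ((k+1:ℕ) + s) = ((k:ℝ) + s) * Real.Gamma (k + s) := by
        push_cast
        rw [show (k:ℝ) + 1 + s = ((k:ℝ) + s) + 1 by ring, Real.Gamma_add_one hks.ne']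
      have e3 : Real.Gamma ((k:ℝ) + (s+1)) = ((k:ℝ) + s) * Real.Gamma (k + s) := by
        rw [show (k:ℝ) + (s+1) = ((k:ℝ) + s) + 1 by ring, Real.Gamma_add_one hks.ne']
      rw [e1, e2, e3]
      have hΓks := Real.Gamma_pos_of_pos hks
      field_simp
      ring
    rw [pascal_sum (fun k => Real.Gamma (k + r) / Real.Gamma (k + s)) n]
    simp only [key]
    have step : ∑ k ∈ Finset.range (n + 1), (-1:ℝ) ^ k * (n.choose k) * ((s - r) * (Real.Gamma (k + r) / Real.Gamma (k + (s + 1))))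
        = (s - r) * ∑ k ∈ Finset.range (n + 1), (-1:ℝ) ^ k * (n.choose k) * (Real.Gamma (k + r) / Real.Gamma (k + (s + 1))) := by
      rw [Finset.mul_sum]
      exact Finset.sum_congr rfl (fun k _ => by ring)
    rw [step, ih (s+1) (by linarith)]
    have hprod : (∏ i ∈ Finset.range (n+1), (s - r + i)) = (s - r) * ∏ i ∈ Finset.range n, (s + 1 - r + i) := by
      rw [Finset.prod_range_succ' (fun i => s - r + (i:ℝ)) n]
      simp only [Nat.cast_zero, add_zero, Nat.cast_add, Nat.cast_one]
      rw [mul_comm]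
      congr 1
      exact Finset.prod_congr rfl (fun i _ => by ring)
    have harg : Real.Gamma (s + ((n:ℕ)+1:ℕ)) = Real.Gamma (s + 1 + n) := by
      congr 1; push_cast; ring
    rw [hprod, harg]
    ring

private lemma coef_id {c x : ℝ} (hc : 1 < c) (n : ℕ) :
    ∑ k ∈ Finset.range (n+1),
        (c * (c-1) / (c + k - 1) * (-x)^k / k.factorial) * (x^(n-k) / (n-k).factorial)
      = Real.Gamma (1 + c) * x^n / Real.Gamma (n + c) := by
  have hc0 : (0:ℝ) < c := by linarith
  have hc1 : (0:ℝ) < c - 1 := by linarith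
  have hD := Dsum hc1 n c hc0
  have hsimp : ∀ k : ℕ, Real.Gamma (k + (c-1)) / Real.Gamma (k + c) = 1 / (c + k - 1) := by
    intro k
    have hk1 : (0:ℝ) < (k:ℝ) + (c - 1) := by positivity
    have e : Real.Gamma ((k:ℝ) + c) = ((k:ℝ) + (c-1)) * Real.Gamma ((k:ℝ) + (c-1)) := by
      rw [show (k:ℝ) + c = ((k:ℝ) + (c-1)) + 1 by ring, Real.Gamma_add_one hk1.ne']
    have hΓ := (Real.Gamma_pos_of_pos hk1).ne'
    have hck : c + (k:ℝ) - 1 ≠ 0 := ne_of_gt (by have := Nat.cast_nonneg (α:=ℝ) k; linarith)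
    rw [e, show ((k:ℝ)+(c-1)) * Real.Gamma ((k:ℝ)+(c-1)) = Real.Gamma ((k:ℝ)+(c-1)) * (c+(k:ℝ)-1) by ring,
      div_mul_eq_div_div, div_self hΓ]
  simp only [hsimp] at hD
  have hprod : (∏ i ∈ Finset.range n, (c - (c-1) + (i:ℝ))) = (n.factorial : ℝ) := by
    have e : ∀ i ∈ Finset.range n, c - (c-1) + (i:ℝ) = (((i+1 : ℕ)) : ℝ) := fun i _ => by push_cast; ring
    rw [Finset.prod_congr rfl e]
    exact_mod_cast congrArg (Nat.cast : ℕ → ℝ) (Finset.prod_range_add_one_eq_factorial n)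
  rw [hprod] at hD
  have hterm : ∀ k ∈ Finset.range (n+1),
      (c * (c-1) / (c + k - 1) * (-x)^k / k.factorial) * (x^(n-k) / (n-k).factorial)
      = (c * (c-1) * x^n / n.factorial) * ((-1:ℝ)^k * (n.choose k) * (1 / (c + k - 1))) := by
    intro k hk
    have hkn : k ≤ n := Nat.lt_succ_iff.mp (Finset.mem_range.mp hk)
    have hxp : x^k * x^(n-k) = x^n := by
      rw [← pow_add, Nat.add_sub_cancel' hkn]
    have hch : ((n.choose k : ℝ)) = (n.factorial : ℝ) / (k.factorial * (n-k).factorial) :=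
      Nat.cast_choose ℝ hkn
    have hkf : (k.factorial : ℝ) ≠ 0 := Nat.cast_ne_zero.mpr k.factorial_ne_zero
    have hnkf : ((n-k).factorial : ℝ) ≠ 0 := Nat.cast_ne_zero.mpr (n-k).factorial_ne_zero
    have hnf : (n.factorial : ℝ) ≠ 0 := Nat.cast_ne_zero.mpr n.factorial_ne_zero
    have hck : c + (k:ℝ) - 1 ≠ 0 := ne_of_gt (by have := Nat.cast_nonneg (α:=ℝ) k; linarith)
    rw [hch, neg_pow]
    field_simp
    rw [← hxp]
  rw [Finset.sum_congr rfl hterm, ← Finset.mul_sum, hD]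
  have hG : Real.Gamma c = (c-1) * Real.Gamma (c-1) := by
    rw [show c = (c-1) + 1 by ring, Real.Gamma_add_one hc1.ne']
    ring_nf
  have hG1 : Real.Gamma (1 + c) = c * Real.Gamma c := by
    rw [show 1 + c = c + 1 by ring, Real.Gamma_add_one hc0.ne']
  have hnf : (n.factorial : ℝ) ≠ 0 := Nat.cast_ne_zero.mpr n.factorial_ne_zero
  have hΓcn : Real.Gamma (c + n) ≠ 0 := (Real.Gamma_pos_of_pos (by positivity)).ne'
  rw [hG1, hG, show (n:ℝ) + c = c + n by ring]
  field_simp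

private lemma summable_coef_norm {C : ℕ → ℝ} {B : ℝ} (x : ℝ) (h : ∀ m, |C m| ≤ B) :
    Summable (fun m : ℕ => ‖C m * (-x)^m / m.factorial‖) := by
  have hg : Summable (fun m : ℕ => B * (|x|^m / m.factorial)) :=
    (Real.summable_pow_div_factorial |x|).mul_left B
  apply Summable.of_nonneg_of_le (fun m => norm_nonneg _) _ hg
  intro m
  have hm : (0:ℝ) < m.factorial := by exact_mod_cast m.factorial_pos
  rw [norm_div, norm_mul, norm_pow, norm_neg, Real.norm_eq_abs, Real.norm_eq_abs, Real.norm_eq_abs,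
    abs_of_pos hm]
  rw [div_eq_mul_one_div, mul_assoc, ← div_eq_mul_one_div]
  exact mul_le_mul_of_nonneg_right (h m) (by positivity)

private lemma summable_coef {C : ℕ → ℝ} {B : ℝ} (x : ℝ) (h : ∀ m, |C m| ≤ B) :
    Summable (fun m : ℕ => C m * (-x)^m / m.factorial) := by
  have hg : Summable (fun m : ℕ => B * (|x|^m / m.factorial)) :=
    (Real.summable_pow_div_factorial |x|).mul_left B
  apply Summable.of_norm_bounded hg
  intro m
  have hm : (0:ℝ) < m.factorial := by exact_mod_cast m.factorial_pos
  rw [norm_div, norm_mul, norm_pow, norm_neg, Real.norm_eq_abs, Real.norm_eq_abs, Real.norm_eq_abs,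
    abs_of_pos hm]
  rw [div_eq_mul_one_div, mul_assoc, ← div_eq_mul_one_div]
  exact mul_le_mul_of_nonneg_right (h m) (by positivity)

/-- Closed-form evaluation of `MISR_R` (Lemma 1): for `α > 2` and `x ≥ 0`,
`e^{−x}·∑_{i=2}^∞ [Γ(1+α/2)Γ(i)/Γ(i+α/2)]·(∑_{k=i}^∞ x^k/k!)
 = 2/(α−2) − (α/(α−2))·F₁(x) − (4x/(α²−4))·F₂(x) + e^{−x}`. -/
theorem stmt_9 (α x : ℝ) (hα : 2 < α) (hx : 0 ≤ x) :
    Real.exp (-x) *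
        ∑' i : ℕ,
          Real.Gamma (1 + α / 2) * Real.Gamma ((i : ℝ) + 2) / Real.Gamma ((i : ℝ) + 2 + α / 2) *
            ∑' k : ℕ, x ^ (k + (i + 2)) / ((k + (i + 2)).factorial : ℝ)
      = 2 / (α - 2) - α / (α - 2) * Fhyp α 1 x - 4 * x / (α ^ 2 - 4) * Fhyp α 2 x
        + Real.exp (-x) := by
  set c := α / 2 with hcdef
  have hc : 1 < c := by rw [hcdef]; linarith
  have hc0 : (0:ℝ) < c := by linarith
  have hc1 : c - 1 ≠ 0 := by intro h; linarith [sub_eq_zero.mp h]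
  have hcp1 : c + 1 ≠ 0 := by positivity
  have hΓc : 0 < Real.Gamma c := Real.Gamma_pos_of_pos hc0
  have hΓ1c : 0 < Real.Gamma (1+c) := Real.Gamma_pos_of_pos (by linarith)
  have hG1 : Real.Gamma (1 + c) = c * Real.Gamma c := by
    rw [show 1 + c = c + 1 by ring, Real.Gamma_add_one hc0.ne']
  have hex : Real.exp x = ∑' n : ℕ, x ^ n / n.factorial := exp_tsum x
  -- tail sums
  have bnd : ∀ (j k : ℕ), x ^ (k + j) / ((k + j).factorial : ℝ)
      ≤ x ^ j / j.factorial * (x ^ k / k.factorial) := by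
    intro j k
    have h1 : ((k.factorial * j.factorial : ℕ) : ℝ) ≤ ((k+j).factorial : ℝ) := by
      exact_mod_cast Nat.le_of_dvd (k+j).factorial_pos
        (Nat.factorial_mul_factorial_dvd_factorial_add k j)
    push_cast at h1
    have h2 : (0:ℝ) < (k.factorial : ℝ) * j.factorial := by positivity
    calc x ^ (k+j) / ((k+j).factorial : ℝ)
        ≤ x^(k+j) / ((k.factorial : ℝ) * j.factorial) := by
          apply div_le_div_of_nonneg_left (by positivity) h2 h1
      _ = x ^ j / j.factorial * (x ^ k / k.factorial) := by rw [pow_add]; ring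
  have sumTail : ∀ j : ℕ, Summable (fun k : ℕ => x ^ (k + j) / ((k + j).factorial : ℝ)) := by
    intro j
    have hg : Summable (fun k : ℕ => x ^ j / j.factorial * (x ^ k / k.factorial)) :=
      (Real.summable_pow_div_factorial x).mul_left _
    exact Summable.of_nonneg_of_le (fun k => by positivity) (fun k => bnd j k) hg
  set Tt : ℕ → ℝ := fun j => ∑' k : ℕ, x ^ (k + j) / ((k + j).factorial : ℝ) with hTt
  have TtStep : ∀ j : ℕ, Tt j = x ^ j / j.factorial + Tt (j+1) := by
    intro j
    rw [hTt]
    simp only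
    rw [Summable.tsum_eq_zero_add (sumTail j)]
    congr 1
    · norm_num
    · exact tsum_congr fun k => by rw [show k + 1 + j = k + (j+1) from by omega]
  have Ttnn : ∀ j, 0 ≤ Tt j := fun j => tsum_nonneg (fun k => by positivity)
  have Ttle : ∀ j : ℕ, Tt j ≤ x ^ j / j.factorial * Real.exp x := by
    intro j
    rw [hex, ← tsum_mul_left]
    exact Summable.tsum_le_tsum (fun k => bnd j k) (sumTail j)
      ((Real.summable_pow_div_factorial x).mul_left _)
  have Tt0 : Tt 0 = Real.exp x := by
    rw [hex, hTt]; exact tsum_congr fun k => by norm_num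
  have Tt1 : Tt 1 = Real.exp x - 1 := by
    have h := TtStep 0
    rw [Tt0] at h
    norm_num at h
    linarith
  -- the sequence b
  set b : ℕ → ℝ := fun i => Real.Gamma (1+c) * Real.Gamma ((i:ℝ)+2) / Real.Gamma ((i:ℝ)+1+c)
    with hb
  have hΓi2 : ∀ i : ℕ, Real.Gamma ((i:ℝ)+2) = (((i+1).factorial : ℕ) : ℝ) := by
    intro i
    rw [show ((i:ℝ)+2) = (((i+1:ℕ)):ℝ) + 1 by push_cast; ring, Real.Gamma_nat_eq_factorial]
  have hdenpos : ∀ i : ℕ, (0:ℝ) < (i:ℝ) + 1 + c := fun i => by positivity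
  have hbpos : ∀ i, 0 < b i := by
    intro i
    have h2 : 0 < Real.Gamma ((i:ℝ)+2) := Real.Gamma_pos_of_pos (by positivity)
    have h3 := Real.Gamma_pos_of_pos (hdenpos i)
    rw [hb]
    positivity
  have hble : ∀ i, b i ≤ c := by
    intro i
    rw [hb]; simp only
    have harg : Real.Gamma ((i:ℝ)+1+c) = Real.Gamma (c + ((i+1:ℕ):ℝ)) := by
      congr 1; push_cast; ring
    have hf : Real.Gamma c * (((i+1).factorial : ℕ) : ℝ) ≤ Real.Gamma (c + ((i+1:ℕ):ℝ)) :=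
      fact_le_gamma hc.le (i+1)
    rw [harg, hΓi2 i, div_le_iff₀ (Real.Gamma_pos_of_pos (by positivity))]
    calc Real.Gamma (1+c) * (((i+1).factorial : ℕ) : ℝ)
        = c * (Real.Gamma c * (((i+1).factorial : ℕ) : ℝ)) := by rw [hG1]; ring
      _ ≤ c * Real.Gamma (c + ((i+1:ℕ):ℝ)) := mul_le_mul_of_nonneg_left hf hc0.le
  set hh : ℕ → ℝ := fun i => Real.Gamma (1+c) * (x^(i+1) / Real.Gamma ((i:ℝ)+1+c)) with hhh
  set K : ℝ := ∑' i : ℕ, x^(i+1) / Real.Gamma ((i:ℝ)+1+c) with hKdef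
  have hbx : ∀ i : ℕ, b i * (x^(i+1)/(((i+1).factorial : ℕ):ℝ)) = hh i := by
    intro i
    rw [hb, hhh]; simp only
    rw [hΓi2 i]
    have hf : (((i+1).factorial : ℕ):ℝ) ≠ 0 := Nat.cast_ne_zero.mpr (i+1).factorial_ne_zero
    have hΓd := (Real.Gamma_pos_of_pos (hdenpos i)).ne'
    field_simp
  have Shh : Summable hh := by
    have hgs : Summable (fun i : ℕ => c * (x^(i+1)/(((i+1).factorial : ℕ) : ℝ))) :=
      (((summable_nat_add_iff 1).mpr (Real.summable_pow_div_factorial x))).mul_left c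
    apply Summable.of_nonneg_of_le _ _ hgs
    · intro i
      rw [hhh]
      have := (Real.Gamma_pos_of_pos (hdenpos i))
      positivity
    · intro i
      rw [← hbx i]
      exact mul_le_mul_of_nonneg_right (hble i) (by positivity)
  set gg : ℕ → ℝ := fun i => b i * Tt (i+1) with hgg
  have Sgg : Summable gg := by
    have hgs : Summable (fun i : ℕ => c * (x^(i+1)/(((i+1).factorial : ℕ) : ℝ) * Real.exp x)) :=
      ((((summable_nat_add_iff 1).mpr (Real.summable_pow_div_factorial x))).mul_right _).mul_left c
    apply Summable.of_nonneg_of_le (fun i => mul_nonneg (hbpos i).le (Ttnn _)) (fun i => ?_) hgs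
    exact mul_le_mul (hble i) (Ttle (i+1)) (Ttnn _) hc0.le
  have Sgg' : Summable (fun i => gg (i+1)) := (summable_nat_add_iff 1).mpr Sgg
  -- telescoping
  have htel : ∀ i : ℕ, (c-1) * (Real.Gamma (1+c) * Real.Gamma ((i:ℝ)+2) / Real.Gamma ((i:ℝ)+2+c))
      = b i - b (i+1) := by
    intro i
    have h1pos : (0:ℝ) < (i:ℝ) + 2 := by positivity
    have h2 : Real.Gamma ((i:ℝ)+2+c) = ((i:ℝ)+1+c) * Real.Gamma ((i:ℝ)+1+c) := by
      rw [show (i:ℝ)+2+c = ((i:ℝ)+1+c) + 1 by ring, Real.Gamma_add_one (hdenpos i).ne']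
    have h3 : Real.Gamma (((i+1:ℕ):ℝ)+2) = ((i:ℝ)+2) * Real.Gamma ((i:ℝ)+2) := by
      push_cast
      rw [show (i:ℝ)+1+2 = ((i:ℝ)+2) + 1 by ring, Real.Gamma_add_one h1pos.ne']
    have h4 : Real.Gamma (((i+1:ℕ):ℝ)+1+c) = Real.Gamma ((i:ℝ)+2+c) := by
      congr 1; push_cast; ring
    have hΓ2 := (Real.Gamma_pos_of_pos h1pos).ne'
    have hΓd := (Real.Gamma_pos_of_pos (hdenpos i)).ne'
    rw [hb]; simp only
    rw [h2, h3, h4, h2]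
    field_simp
    ring
  have main1 : (c-1) * (∑' i : ℕ, Real.Gamma (1+c) * Real.Gamma ((i:ℝ)+2) / Real.Gamma ((i:ℝ)+2+c)
      * ∑' k : ℕ, x ^ (k + (i+2)) / ((k + (i+2)).factorial : ℝ))
      = Real.exp x - 1 - Real.Gamma (1+c) * K := by
    rw [← tsum_mul_left]
    have e : ∀ i : ℕ, (c-1) * (Real.Gamma (1+c) * Real.Gamma ((i:ℝ)+2) / Real.Gamma ((i:ℝ)+2+c)
        * ∑' k : ℕ, x ^ (k + (i+2)) / ((k + (i+2)).factorial : ℝ))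
        = (gg i - gg (i+1)) - hh i := by
      intro i
      have eg : gg i = hh i + b i * Tt (i+2) := by
        rw [hgg]; simp only
        rw [show (i+1)+1 = i+2 from rfl] at *
        rw [TtStep (i+1), mul_add, hbx i]
      have eg' : gg (i+1) = b (i+1) * Tt (i+2) := rfl
      have eT : (∑' k : ℕ, x ^ (k + (i+2)) / ((k + (i+2)).factorial : ℝ)) = Tt (i+2) := rfl
      rw [eT, ← mul_assoc, htel i, eg, eg']
      ring
    rw [tsum_congr e, Summable.tsum_sub (Sgg.sub Sgg') Shh, Summable.tsum_sub Sgg Sgg']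
    have hsplit : ∑' i, gg i = gg 0 + ∑' i, gg (i+1) := Summable.tsum_eq_zero_add Sgg
    have hg0 : gg 0 = Real.exp x - 1 := by
      have hb0 : b 0 = 1 := by
        rw [hb]; simp only [Nat.cast_zero, zero_add, Real.Gamma_two, mul_one]
        exact div_self hΓ1c.ne'
      show b 0 * Tt 1 = _
      rw [hb0, one_mul, Tt1]
    have hKK : ∑' i, hh i = Real.Gamma (1+c) * K := by
      rw [hKdef, hhh, ← tsum_mul_left]
    linarith [hsplit, hg0, hKK]
    -- hypergeometric series simplification
  have hΓcm : ∀ m : ℕ, (0:ℝ) < c + m := fun m => by positivity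
  have hΓcmne : ∀ m : ℕ, Real.Gamma (c + m) ≠ 0 := fun m => (Real.Gamma_pos_of_pos (hΓcm m)).ne'
  have hF1 : Fhyp α 1 x = ∑' m : ℕ, c/(c+m) * (-x)^m / m.factorial := by
    unfold Fhyp poch
    simp only [← hcdef, Nat.cast_one]
    apply tsum_congr; intro m
    have e1 : Real.Gamma (1 + c + m) = (c+m) * Real.Gamma (c+m) := by
      rw [show 1 + c + (m:ℝ) = (c+m) + 1 by ring, Real.Gamma_add_one (hΓcm m).ne']
    rw [e1, hG1]
    have h2 := hΓcmne m
    have h3 : ((m.factorial : ℕ):ℝ) ≠ 0 := Nat.cast_ne_zero.mpr m.factorial_ne_zero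
    have h4 := (hΓcm m).ne'
    field_simp
  have hF2 : Fhyp α 2 x = ∑' m : ℕ, c*(c+1)/((c+m)*(c+m+1)) * (-x)^m / m.factorial := by
    unfold Fhyp poch
    simp only [← hcdef, Nat.cast_ofNat]
    apply tsum_congr; intro m
    have e1 : Real.Gamma (2 + c + m) = (c+m+1) * ((c+m) * Real.Gamma (c+m)) := by
      rw [show 2 + c + (m:ℝ) = ((c+m) + 1) + 1 by ring,
        Real.Gamma_add_one (by positivity : (c+(m:ℝ))+1 ≠ 0),
        Real.Gamma_add_one (hΓcm m).ne']
    have e2 : Real.Gamma (2 + c) = (c+1) * (c * Real.Gamma c) := by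
      rw [show (2:ℝ) + c = (c + 1) + 1 by ring,
        Real.Gamma_add_one (by positivity : c+1 ≠ 0),
        Real.Gamma_add_one hc0.ne']
    rw [e1, e2]
    have h2 := hΓcmne m
    have h3 : ((m.factorial : ℕ):ℝ) ≠ 0 := Nat.cast_ne_zero.mpr m.factorial_ne_zero
    have h4 : c + (m:ℝ) + 1 ≠ 0 := by positivity
    have h5 := (hΓcm m).ne'
    field_simp
  -- the series A
  have hcm1 : ∀ m : ℕ, (0:ℝ) < c + m - 1 := fun m => by
    have := Nat.cast_nonneg (α:=ℝ) m; linarith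
  set u : ℕ → ℝ := fun m => c*(c-1)/(c+(m:ℝ)-1) * (-x)^m / m.factorial with hu
  have habs : ∀ m : ℕ, |c*(c-1)/(c+(m:ℝ)-1)| ≤ c := by
    intro m
    have h1 := hcm1 m
    rw [abs_of_nonneg (div_nonneg (mul_nonneg hc0.le (by linarith)) h1.le), div_le_iff₀ h1]
    nlinarith [Nat.cast_nonneg (α:=ℝ) m]
  have Su_norm : Summable (fun m : ℕ => ‖u m‖) := by
    rw [hu]
    exact summable_coef_norm (C := fun m : ℕ => c*(c-1)/(c+(m:ℝ)-1)) (B := c) x habs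
  have Su : Summable u := Su_norm.of_norm
  set A : ℝ := ∑' m : ℕ, u m with hA
  have hE2 : A = c * Fhyp α 1 x + (x/(c+1)) * Fhyp α 2 x := by
    rw [hF1, hF2, ← tsum_mul_left, ← tsum_mul_left]
    have Sv : Summable (fun m : ℕ => c * (c/(c+(m:ℝ)) * (-x)^m / m.factorial)) := by
      have base : Summable (fun m : ℕ => (c * (c/(c+(m:ℝ)))) * (-x)^m / m.factorial) := by
        apply summable_coef (C := fun m : ℕ => c * (c/(c+(m:ℝ)))) (B := c) x
        intro m
        have h1 := hΓcm m
        have hle : c/(c+(m:ℝ)) ≤ 1 := by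
          rw [div_le_one h1]; linarith [Nat.cast_nonneg (α:=ℝ) m]
        rw [abs_of_nonneg (by positivity)]
        calc c * (c/(c+(m:ℝ))) ≤ c * 1 := mul_le_mul_of_nonneg_left hle hc0.le
          _ = c := mul_one c
      exact base.congr (fun m => by ring)
    have Sw : Summable (fun m : ℕ =>
        -(c*(m:ℝ)/((c+(m:ℝ)-1)*(c+(m:ℝ)))) * (-x)^m / m.factorial) := by
      apply summable_coef (C := fun m : ℕ => -(c*(m:ℝ)/((c+(m:ℝ)-1)*(c+(m:ℝ))))) (B := c) x
      intro m
      have h1 := hcm1 m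
      have h2 := hΓcm m
      have hm0 := Nat.cast_nonneg (α:=ℝ) m
      rw [abs_neg, abs_of_nonneg (div_nonneg (mul_nonneg hc0.le hm0) (by positivity)),
        div_le_iff₀ (by positivity)]
      have key : (m:ℝ) ≤ (c+(m:ℝ)-1)*(c+(m:ℝ)) := by
        nlinarith [mul_nonneg hm0 hm0, mul_nonneg hm0 (sub_nonneg.mpr hc.le)]
      exact mul_le_mul_of_nonneg_left key hc0.le
    have huvw : ∀ m : ℕ, u m = c * (c/(c+(m:ℝ)) * (-x)^m / m.factorial)
        + (-(c*(m:ℝ)/((c+(m:ℝ)-1)*(c+(m:ℝ)))) * (-x)^m / m.factorial) := by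
      intro m
      rw [hu]
      have h1 := (hcm1 m).ne'
      have h2 := (hΓcm m).ne'
      have h3 : ((m.factorial : ℕ):ℝ) ≠ 0 := Nat.cast_ne_zero.mpr m.factorial_ne_zero
      field_simp
      ring
    rw [hA, tsum_congr huvw, Summable.tsum_add Sv Sw]
    congr 1
    rw [Summable.tsum_eq_zero_add Sw]
    have hw0 : -(c*((0:ℕ):ℝ)/((c+((0:ℕ):ℝ)-1)*(c+((0:ℕ):ℝ)))) * (-x)^(0:ℕ) / (0:ℕ).factorial = 0 := by
      norm_num
    rw [hw0, zero_add]
    apply tsum_congr; intro n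
    have h1 := (hcm1 n).ne'
    have h2 := (hΓcm n).ne'
    have h3 : ((n.factorial : ℕ):ℝ) ≠ 0 := Nat.cast_ne_zero.mpr n.factorial_ne_zero
    have h4 : c + (n:ℝ) + 1 ≠ 0 := by positivity
    have h5 : ((n:ℝ) + 1) ≠ 0 := by positivity
    push_cast
    rw [show c + ((n:ℝ)+1) - 1 = c + n by ring, show c + ((n:ℝ)+1) = c + n + 1 by ring,
      pow_succ, Nat.factorial_succ]
    push_cast
    field_simp
  -- Cauchy product (Kummer transformation)
  have Sexp_norm : Summable (fun n : ℕ => ‖x^n / (n.factorial:ℝ)‖) := by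
    apply Summable.congr (Real.summable_pow_div_factorial |x|)
    intro n
    have hn : (0:ℝ) < n.factorial := by exact_mod_cast n.factorial_pos
    rw [norm_div, norm_pow, Real.norm_eq_abs, Real.norm_eq_abs, abs_of_pos hn]
  have hcauchy : A * Real.exp x = ∑' n : ℕ, Real.Gamma (1+c) * x^n / Real.Gamma ((n:ℝ)+c) := by
    rw [hA, hex, tsum_mul_tsum_eq_tsum_sum_range_of_summable_norm Su_norm Sexp_norm]
    apply tsum_congr; intro n
    rw [hu]
    exact coef_id hc n
  have hK0sum : Summable (fun n : ℕ => Real.Gamma (1+c) * x^n / Real.Gamma ((n:ℝ)+c)) := by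
    have hgs : Summable (fun n : ℕ => Real.Gamma (1+c)/Real.Gamma c * (x^n / n.factorial)) :=
      (Real.summable_pow_div_factorial x).mul_left _
    apply Summable.of_nonneg_of_le _ _ hgs
    · intro n
      have := Real.Gamma_pos_of_pos (show (0:ℝ) < (n:ℝ)+c by positivity)
      positivity
    · intro n
      have hf : Real.Gamma c * (n.factorial:ℝ) ≤ Real.Gamma (c+(n:ℝ)) := by
        have := fact_le_gamma hc.le n
        exact this
      have hpos : (0:ℝ) < Real.Gamma c * (n.factorial:ℝ) := by positivity
      have harg : Real.Gamma ((n:ℝ)+c) = Real.Gamma (c+(n:ℝ)) := by rw [add_comm]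
      rw [harg, mul_div_assoc]
      calc Real.Gamma (1+c) * (x^n / Real.Gamma (c+(n:ℝ)))
          ≤ Real.Gamma (1+c) * (x^n / (Real.Gamma c * (n.factorial:ℝ))) := by
            apply mul_le_mul_of_nonneg_left _ hΓ1c.le
            apply div_le_div_of_nonneg_left (by positivity) hpos hf
        _ = Real.Gamma (1+c)/Real.Gamma c * (x^n / n.factorial) := by
            field_simp
  have hK0split : (∑' n : ℕ, Real.Gamma (1+c) * x^n / Real.Gamma ((n:ℝ)+c))
      = c + Real.Gamma (1+c) * K := by
    rw [Summable.tsum_eq_zero_add hK0sum]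
    congr 1
    · simp only [Nat.cast_zero, zero_add, pow_zero, mul_one]
      rw [hG1, mul_div_assoc, div_self hΓc.ne', mul_one]
    · rw [hKdef, ← tsum_mul_left]
      apply tsum_congr; intro n
      have harg : ((n+1:ℕ):ℝ) + c = (n:ℝ)+1+c := by push_cast; ring
      rw [harg, mul_div_assoc]
  have hKEY : Real.exp x * A = c + Real.Gamma (1+c) * K := by
    rw [mul_comm, hcauchy, hK0split]
  -- final assembly
  have hαc : α = 2*c := by rw [hcdef]; ring
  have hc1' : (0:ℝ) < c - 1 := by linarith
  have hcp1' : (0:ℝ) < c + 1 := by linarith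
  have k1 : 2/(α-2) = 1/(c-1) := by
    rw [hαc, show 2*c-2 = 2*(c-1) by ring]
    field_simp
  have k2 : α/(α-2) = c/(c-1) := by
    rw [hαc, show 2*c-2 = 2*(c-1) by ring]
    rw [div_eq_div_iff (by positivity) hc1'.ne']
    ring
  have k3 : 4*x/(α^2-4) = x/((c-1)*(c+1)) := by
    rw [hαc, show (2*c)^2-4 = 4*((c-1)*(c+1)) by ring]
    rw [div_eq_div_iff (by positivity) (show ((c-1)*(c+1)) ≠ 0 by positivity)]
    ring
  rw [k1, k2, k3]
  have hΓK : Real.Gamma (1+c) * K = Real.exp x * A - c := by linarith [hKEY]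
  have hSval : (∑' i : ℕ, Real.Gamma (1+c) * Real.Gamma ((i:ℝ)+2) / Real.Gamma ((i:ℝ)+2+c)
      * ∑' k : ℕ, x ^ (k+(i+2)) / ((k+(i+2)).factorial : ℝ))
      = (Real.exp x - 1 - (Real.exp x * A - c))/(c-1) := by
    rw [eq_div_iff hc1, ← hΓK]
    linarith [main1]
  rw [hSval, hE2, Real.exp_neg]
  have hEne := (Real.exp_pos x).ne'
  field_simp
  ring
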